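/- A unitary operator on a separable Hilbert space whose spectrum is countable has a complete orthonormal basis of eigenvectors (pure point spectrum). -/

import Mathlib

open Set

lemma aux_exists_isolated {S : Set ℂ} (hS : IsCompact S) (hc : S.Countable) (hne : S.Nonempty) :
    ∃ l ∈ S, ∃ V : Set ℂ, IsOpen V ∧ V ∩ S = {l} := by
  by_contra h
  push_neg at h
  have hpre : Preperfect S := by
    intro x hx
    rw [accPt_iff_nhds]
    intro W hW
    have hne' := h x hx (interior W) isOpen_interior
    have hxint : x ∈ interior W ∩ S := ⟨mem_interior_iff_mem_nhds.mpr hW, hx⟩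
    have : ∃ y ∈ interior W ∩ S, y ≠ x := by
      by_contra hy
      push_neg at hy
      exact hne' (Set.eq_singleton_iff_unique_mem.mpr ⟨hxint, hy⟩)
    obtain ⟨y, hy, hyx⟩ := this
    exact ⟨y, ⟨interior_subset hy.1, hy.2⟩, hyx⟩
  have hperf : Perfect S := ⟨hS.isClosed, hpre⟩
  obtain ⟨f, hfS, -, hfinj⟩ := hperf.exists_nat_bool_injection hne
  have : Countable (ℕ → Bool) := by
    have := hc.to_subtype
    exact Function.Injective.countable (f := fun g => (⟨f g, hfS ⟨g, rfl⟩⟩ : S))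
      (fun a b hab => hfinj (congrArg Subtype.val hab))
  obtain ⟨F, hF⟩ := (countable_iff_exists_surjective (α := ℕ → Bool)).mp this
  obtain ⟨m, hm⟩ := hF fun n => !(F n n)
  have := congrFun hm m
  simp at this

lemma aux_eigen_of_isolated {K : Type*} [NormedAddCommGroup K] [InnerProductSpace ℂ K]
    [CompleteSpace K] (V : K →L[ℂ] K) (hV : IsStarNormal V) {l : ℂ}
    (hl : l ∈ spectrum ℂ V) {W : Set ℂ} (hW : IsOpen W) (hWl : W ∩ spectrum ℂ V = {l}) :
    ∃ x : K, x ≠ 0 ∧ V x = l • x := by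
  classical
  set f : ℂ → ℂ := fun z => if z = l then 1 else 0 with hf
  have hfc : ContinuousOn f (spectrum ℂ V) := by
    intro z hz
    by_cases hzl : z = l
    · subst hzl
      have hzW : z ∈ W := by
        have : z ∈ W ∩ spectrum ℂ V := hWl ▸ rfl
        exact this.1
      have : ∀ᶠ y in nhdsWithin z (spectrum ℂ V), f y = 1 := by
        filter_upwards [mem_nhdsWithin_of_mem_nhds (hW.mem_nhds hzW),
          self_mem_nhdsWithin] with y hyW hyS
        have hy : y ∈ W ∩ spectrum ℂ V := ⟨hyW, hyS⟩
        rw [hWl, mem_singleton_iff] at hy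
        simp [f, hy]
      exact (continuousWithinAt_const (b := (1:ℂ))).congr_of_eventuallyEq this (by simp [f])
    · have : ∀ᶠ y in nhdsWithin z (spectrum ℂ V), f y = 0 := by
        filter_upwards [mem_nhdsWithin_of_mem_nhds (isOpen_ne.mem_nhds hzl)] with y hy
        simp [f, hy]
      exact (continuousWithinAt_const (b := (0:ℂ))).congr_of_eventuallyEq this (by simp [f, hzl])
  set P := cfc f V with hP
  have hPne : P ≠ 0 := by
    intro h0
    have h1 : cfc f V = cfc (fun _ : ℂ => (0:ℂ)) V := by
      rw [cfc_const_zero, ← hP, h0]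
    have := (cfc_eq_cfc_iff_eqOn (a := V)).mp h1 hl
    simp [f] at this
  have hmul : V * P = l • P := by
    have h1 : cfc (fun z : ℂ => z * f z) V = V * P := by
      rw [cfc_mul _ _ V (continuousOn_id' _) hfc, cfc_id' ℂ V]
    have h2 : cfc (fun z : ℂ => z * f z) V = cfc (fun z : ℂ => l * f z) V := by
      apply cfc_congr
      intro z hz
      by_cases hzl : z = l
      · simp [f, hzl]
      · simp [f, hzl]
    have h3 : cfc (fun z : ℂ => l * f z) V = l • P := cfc_const_mul l f V hfc
    rw [← h1, h2, h3]
  obtain ⟨x, hx⟩ : ∃ x, P x ≠ 0 := by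
    by_contra hx
    push_neg at hx
    exact hPne (ContinuousLinearMap.ext fun x => by simpa using hx x)
  refine ⟨P x, hx, ?_⟩
  have := congrArg (fun (T : K →L[ℂ] K) => T x) hmul
  simpa using this
open Set Submodule

local notation "⟪" x ", " y "⟫" => inner (𝕜 := ℂ) x y

/-- A unitary operator on a separable Hilbert space whose spectrum is countable has
pure point spectrum: the closed span of its eigenspaces is the whole space. -/
theorem unitary_countable_spectrum_pure_point {H : Type*} [NormedAddCommGroup H]
    [InnerProductSpace ℂ H] [CompleteSpace H] [TopologicalSpace.SeparableSpace H]
    (U : H →L[ℂ] H) (hU : (U.adjoint * U = 1) ∧ (U * U.adjoint = 1))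
    (hspec : (spectrum ℂ U).Countable) :
    (⨆ μ : ℂ, Module.End.eigenspace (U : H →ₗ[ℂ] H) μ).topologicalClosure = ⊤ := by
  classical
  set E : Submodule ℂ H := ⨆ μ : ℂ, Module.End.eigenspace (U : H →ₗ[ℂ] H) μ with hE
  rw [Submodule.topologicalClosure_eq_top_iff]
  by_contra hKbot
  set K : Submodule ℂ H := Eᗮ with hK
  -- U* U = 1 pointwise
  have hUaU : ∀ x : H, U.adjoint (U x) = x := fun x => by
    have := ContinuousLinearMap.ext_iff.mp hU.1 x
    simpa using this
  have hUUa : ∀ x : H, U (U.adjoint x) = x := fun x => by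
    have := ContinuousLinearMap.ext_iff.mp hU.2 x
    simpa using this
  have hUinj : ∀ x : H, U x = 0 → x = 0 := fun x hx => by
    rw [← hUaU x, hx, map_zero]
  -- eigenspace membership restated
  have hmem : ∀ (μ : ℂ) (x : H), x ∈ Module.End.eigenspace (U : H →ₗ[ℂ] H) μ ↔ U x = μ • x := by
    intro μ x
    rw [Module.End.mem_eigenspace_iff]
    simp
  -- E is invariant under U
  have hEU : ∀ x ∈ E, U x ∈ E := by
    intro x hx
    refine Submodule.iSup_induction _ (motive := fun y => U y ∈ E) hx (fun μ y hy => ?_) (by simp) ?_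
    · have : U y ∈ Module.End.eigenspace (U : H →ₗ[ℂ] H) μ := by
        rw [hmem] at hy ⊢
        rw [hy, map_smul, hy]
      exact le_iSup (fun μ => Module.End.eigenspace (U : H →ₗ[ℂ] H) μ) μ this
    · intro a b ha hb
      rw [map_add]; exact E.add_mem ha hb
  -- E is invariant under U†
  have hEUa : ∀ x ∈ E, U.adjoint x ∈ E := by
    intro x hx
    refine Submodule.iSup_induction _ (motive := fun y => U.adjoint y ∈ E) hx (fun μ y hy => ?_)
      (by simp) ?_
    · rw [hmem] at hy
      by_cases hμ : μ = 0
      · have : y = 0 := hUinj y (by rw [hy, hμ, zero_smul])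
        simp [this]
      · have h1 : U.adjoint y = μ⁻¹ • y := by
          have := congrArg U.adjoint hy
          rw [hUaU, map_smul] at this
          conv_rhs => rw [this]
          rw [smul_smul, inv_mul_cancel₀ hμ, one_smul]
        have : U.adjoint y ∈ Module.End.eigenspace (U : H →ₗ[ℂ] H) μ := by
          rw [h1]
          exact Submodule.smul_mem _ _ ((hmem μ y).mpr hy)
        exact le_iSup (fun μ => Module.End.eigenspace (U : H →ₗ[ℂ] H) μ) μ this
    · intro a b ha hb
      rw [map_add]; exact E.add_mem ha hb
  -- closure of E invariant under U
  set Ebar := E.topologicalClosure with hEbar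
  have hEbarU : ∀ x ∈ Ebar, U x ∈ Ebar := by
    intro x hx
    show U x ∈ closure (E : Set H)
    exact map_mem_closure U.continuous hx hEU
  -- K invariant under U and U†
  have hKU : ∀ x ∈ K, U x ∈ K := by
    intro x hx
    rw [hK, Submodule.mem_orthogonal] at hx ⊢
    intro u hu
    rw [← ContinuousLinearMap.adjoint_inner_left]
    exact hx _ (hEUa u hu)
  have hKUa : ∀ x ∈ K, U.adjoint x ∈ K := by
    intro x hx
    rw [hK, Submodule.mem_orthogonal] at hx ⊢
    intro u hu
    rw [← ContinuousLinearMap.adjoint_inner_left, ContinuousLinearMap.adjoint_adjoint]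
    exact hx _ (hEU u hu)
  haveI : CompleteSpace K := Submodule.instOrthogonalCompleteSpace (K := E)
  haveI : HasOrthogonalProjection K := HasOrthogonalProjection.ofCompleteSpace K
  set V : K →L[ℂ] K :=
    ContinuousLinearMap.codRestrict (U.comp K.subtypeL) K (fun x => hKU x x.2) with hV
  set Va : K →L[ℂ] K :=
    ContinuousLinearMap.codRestrict (U.adjoint.comp K.subtypeL) K (fun x => hKUa x x.2) with hVa
  have hVadj : Va = ContinuousLinearMap.adjoint V := by
    rw [ContinuousLinearMap.eq_adjoint_iff]
    intro x y
    show ⟪(U.adjoint (↑x : H) : H), (↑y : H)⟫ = ⟪(↑x : H), (U (↑y : H) : H)⟫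
    exact ContinuousLinearMap.adjoint_inner_left U _ _
  have hVVa : V * Va = 1 := by
    ext x
    show U (U.adjoint ↑x) = (↑x : H)
    exact hUUa ↑x
  have hVaV : Va * V = 1 := by
    ext x
    show U.adjoint (U ↑x) = (↑x : H)
    exact hUaU ↑x
  haveI hVnormal : IsStarNormal V := ⟨by
    rw [Commute, SemiconjBy, ContinuousLinearMap.star_eq_adjoint, ← hVadj, hVaV, hVVa]⟩
  haveI hKnt : Nontrivial K := Submodule.nontrivial_iff_ne_bot.mpr hKbot
  haveI : Nontrivial (K →L[ℂ] K) := by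
    obtain ⟨z, hz⟩ := exists_ne (0 : K)
    exact ⟨1, 0, fun h => hz (by simpa using ContinuousLinearMap.ext_iff.mp h z)⟩
  -- spectrum of V is contained in spectrum of U
  have hsub : spectrum ℂ V ⊆ spectrum ℂ U := by
    intro l hl
    by_contra hlU
    rw [spectrum.notMem_iff] at hlU
    set T := algebraMap ℂ (H →L[ℂ] H) l - U with hT
    set R := (↑hlU.unit⁻¹ : H →L[ℂ] H) with hR
    have hRT1 : R * T = 1 := by
      have h := hlU.unit.inv_mul
      rw [IsUnit.unit_spec] at h
      exact h
    have hTR1 : T * R = 1 := by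
      have h := hlU.unit.mul_inv
      rw [IsUnit.unit_spec] at h
      exact h
    have hRT : ∀ x, R (T x) = x := fun x => by
      have := ContinuousLinearMap.ext_iff.mp hRT1 x
      simpa using this
    have hTR : ∀ x, T (R x) = x := fun x => by
      have := ContinuousLinearMap.ext_iff.mp hTR1 x
      simpa using this
    have hTapp : ∀ x : H, T x = l • x - U x := fun x => by
      simp [hT, Algebra.algebraMap_eq_smul_one]
    have hTinj : ∀ x, T x = 0 → x = 0 := fun x hx => by rw [← hRT x, hx, map_zero]
    have hTE : ∀ x ∈ Ebar, T x ∈ Ebar := fun x hx => by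
      rw [hTapp]
      exact Ebar.sub_mem (Ebar.smul_mem _ hx) (hEbarU x hx)
    have hTK : ∀ x ∈ K, T x ∈ K := fun x hx => by
      rw [hTapp]
      exact K.sub_mem (K.smul_mem _ hx) (hKU x hx)
    have hRK : ∀ x ∈ K, R x ∈ K := by
      intro x hx
      obtain ⟨a, ha, b, hb, hab⟩ := K.exists_add_mem_mem_orthogonal (R x)
      have hbE : b ∈ Ebar := by
        rw [hK, Submodule.orthogonal_orthogonal_eq_closure] at hb
        exact hb
      have hTbK : T b ∈ K := by
        have h1 : T (R x) = T a + T b := by rw [hab, map_add]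
        rw [hTR] at h1
        have h2 : T b = x - T a := by rw [h1]; abel
        rw [h2]
        exact K.sub_mem hx (hTK a ha)
      have hTbE : T b ∈ Kᗮ := by
        rw [hK, Submodule.orthogonal_orthogonal_eq_closure]
        exact hTE b hbE
      have hTb0 : T b = 0 := Submodule.disjoint_def.mp K.orthogonal_disjoint _ hTbK hTbE
      have hb0 : b = 0 := hTinj b hTb0
      rw [hab, hb0, add_zero]
      exact ha
    have hunit : IsUnit (algebraMap ℂ (K →L[ℂ] K) l - V) := by
      refine ⟨⟨algebraMap ℂ (K →L[ℂ] K) l - V,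
        ContinuousLinearMap.codRestrict (R.comp K.subtypeL) K (fun x => hRK x x.2), ?_, ?_⟩, rfl⟩
      · ext x
        have h := hTR (↑x : H)
        rw [hTapp] at h
        exact h
      · ext x
        have h := hRT (↑x : H)
        rw [hTapp] at h
        exact h
    rw [spectrum.mem_iff] at hl
    exact hl hunit
  -- find an isolated point of the spectrum of V and an eigenvector
  obtain ⟨l, hl, W, hW, hWl⟩ :=
    aux_exists_isolated (spectrum.isCompact V) (hspec.mono hsub) (spectrum.nonempty V)
  obtain ⟨x, hx0, hxeig⟩ := aux_eigen_of_isolated V hVnormal hl hW hWl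
  have hUx : U ↑x = l • (↑x : H) := by
    have := congrArg Subtype.val hxeig
    exact this
  have hxE : (↑x : H) ∈ E := le_iSup (fun μ => Module.End.eigenspace (U : H →ₗ[ℂ] H) μ) l
    ((hmem l ↑x).mpr hUx)
  have hx00 : (↑x : H) = 0 := by
    have hxK : (↑x : H) ∈ Eᗮ := x.2
    exact inner_self_eq_zero.mp ((Submodule.mem_orthogonal E ↑x).mp hxK ↑x hxE)
  exact hx0 (Subtype.ext hx00)
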